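/- Let (X, ‖·‖, ≼) be a regular partially ordered Banach space and D a nonempty closed inductive subset of X. Let F : D → D be an ≼-increasing demi-continuous mapping and suppose there is a point x₀ ∈ D with x₀ ≼ F x₀. Then the fixed point set 𝔉(F) = {x ∈ D : F x = x} is a nonempty chain-complete subset of D, and F has an ≼-maximal fixed point. (Theorem 4.1 (a), (a')) -/

import Mathlib

/-- The partial order on a Banach space induced by a cone `K`: `x ≼ y` iff `y - x ∈ K`. -/
def coneLe {X : Type*} [NormedAddCommGroup X] (K : Set X) (x y : X) : Prop := y - x ∈ K

open Filter


section Aux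
variable {X : Type*} [NormedAddCommGroup X] {K : Set X}

lemma coneLe_refl (hK0 : (0 : X) ∈ K) (x : X) : coneLe K x x := by
  simpa [coneLe] using hK0

lemma coneLe_trans (hKadd : ∀ x ∈ K, ∀ y ∈ K, x + y ∈ K) {x y z : X}
    (h1 : coneLe K x y) (h2 : coneLe K y z) : coneLe K x z := by
  have := hKadd _ h2 _ h1
  simpa [coneLe, sub_add_sub_cancel] using this

lemma coneLe_of_monotone (hK0 : (0 : X) ∈ K) (hKadd : ∀ x ∈ K, ∀ y ∈ K, x + y ∈ K)
    {u : ℕ → X} (hu : ∀ n, coneLe K (u n) (u (n + 1))) :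
    ∀ m n, m ≤ n → coneLe K (u m) (u n) := by
  intro m n h
  induction h with
  | refl => exact coneLe_refl hK0 _
  | step h ih => exact coneLe_trans hKadd ih (hu _)

lemma coneLe_lim_right (hKclosed : IsClosed K) {u : ℕ → X} {p c : X}
    (hp : ∀ᶠ n in atTop, coneLe K c (u n)) (hlim : Tendsto u atTop (nhds p)) :
    coneLe K c p :=
  hKclosed.mem_of_tendsto (hlim.sub_const c) hp

lemma coneLe_lim_left (hKclosed : IsClosed K) {u : ℕ → X} {p b : X}
    (hb : ∀ᶠ n in atTop, coneLe K (u n) b) (hlim : Tendsto u atTop (nhds p)) :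
    coneLe K p b :=
  hKclosed.mem_of_tendsto (tendsto_const_nhds.sub hlim) hb

noncomputable def chainSeq (K : Set X) (c : ℕ → X) : ℕ → X
  | 0 => c 0
  | n + 1 => @ite _ (coneLe K (chainSeq K c n) (c (n + 1))) (Classical.dec _)
      (c (n + 1)) (chainSeq K c n)

/-- An upper-bounded chain has a least upper bound that is the limit of an
increasing sequence from the chain. -/
lemma chain_lub (hKclosed : IsClosed K) (hK0 : (0 : X) ∈ K)
    (hKadd : ∀ x ∈ K, ∀ y ∈ K, x + y ∈ K)
    (hreg : ∀ u : ℕ → X, (∀ n, coneLe K (u n) (u (n + 1))) →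
      (∃ b, ∀ n, coneLe K (u n) b) → ∃ p, Tendsto u atTop (nhds p))
    {C : Set X} (hC : IsChain (coneLe K) C) (hne : C.Nonempty)
    {b : X} (hb : ∀ c ∈ C, coneLe K c b) :
    ∃ s : X, ∃ d : ℕ → X, (∀ n, d n ∈ C) ∧ Tendsto d atTop (nhds s) ∧
      (∀ c ∈ C, coneLe K c s) ∧
      (∀ b', (∀ c ∈ C, coneLe K c b') → coneLe K s b') := by
  obtain ⟨c₀, hc₀⟩ := hne
  -- chain totality
  have htot : ∀ x ∈ C, ∀ y ∈ C, coneLe K x y ∨ coneLe K y x := by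
    intro x hx y hy
    by_cases hxy : x = y
    · exact Or.inl (hxy ▸ coneLe_refl hK0 x)
    · exact hC hx hy hxy
  -- Step 1: Cauchy-type property
  have key : ∀ ε : ℝ, 0 < ε → ∃ c ∈ C, ∀ c' ∈ C, coneLe K c c' → ‖c' - c‖ < ε := by
    by_contra h
    push_neg at h
    obtain ⟨ε, hε, h⟩ := h
    choose g hgC hgle hgnorm using h
    let f : {x // x ∈ C} → {x // x ∈ C} := fun x => ⟨g x.1 x.2, hgC x.1 x.2⟩
    let v : ℕ → {x // x ∈ C} := fun n => f^[n] ⟨c₀, hc₀⟩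
    have hvsucc : ∀ n, v (n + 1) = f (v n) := fun n => Function.iterate_succ_apply' f n _
    have hvinc : ∀ n, coneLe K ((v n).1) ((v (n + 1)).1) := by
      intro n; rw [hvsucc]; exact hgle _ _
    have hvnorm : ∀ n, ε ≤ ‖(v (n + 1)).1 - (v n).1‖ := by
      intro n; rw [hvsucc]; exact hgnorm _ _
    obtain ⟨p, hp⟩ := hreg (fun n => (v n).1) hvinc ⟨b, fun n => hb _ (v n).2⟩
    have h1 : Tendsto (fun n => (v (n + 1)).1 - (v n).1) atTop (nhds 0) := by
      have h2 : Tendsto (fun n => (v (n + 1)).1) atTop (nhds p) :=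
        hp.comp (tendsto_add_atTop_nat 1)
      simpa using h2.sub hp
    have h3 : Tendsto (fun n => ‖(v (n + 1)).1 - (v n).1‖) atTop (nhds 0) := by
      simpa using h1.norm
    have h4 : ∀ᶠ n in atTop, ‖(v (n + 1)).1 - (v n).1‖ < ε :=
      h3.eventually (eventually_lt_nhds hε)
    obtain ⟨n, hn⟩ := h4.exists
    exact absurd (hvnorm n) (not_le.mpr hn)
  choose c hcC hcprop using fun n : ℕ => key (1 / (n + 1)) (by positivity)
  set d : ℕ → X := chainSeq K c with hd
  have hdsucc : ∀ n, d (n + 1) = @ite _ (coneLe K (d n) (c (n + 1))) (Classical.dec _)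
      (c (n + 1)) (d n) := fun n => rfl
  have hdprop : ∀ n, d n ∈ C ∧ coneLe K (c n) (d n) := by
    intro n
    induction n with
    | zero => exact ⟨hcC 0, coneLe_refl hK0 _⟩
    | succ n ih =>
      rw [hdsucc]
      split_ifs with h
      · exact ⟨hcC (n + 1), coneLe_refl hK0 _⟩
      · refine ⟨ih.1, ?_⟩
        rcases htot _ (hcC (n + 1)) _ ih.1 with h' | h'
        · exact h'
        · exact absurd h' h
  have hdinc : ∀ n, coneLe K (d n) (d (n + 1)) := by
    intro n
    rw [hdsucc]
    split_ifs with h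
    · exact h
    · exact coneLe_refl hK0 _
  obtain ⟨s, hs⟩ := hreg d hdinc ⟨b, fun n => hb _ (hdprop n).1⟩
  have hds : ∀ n, coneLe K (d n) s := by
    intro n
    refine coneLe_lim_right hKclosed ?_ hs
    filter_upwards [eventually_ge_atTop n] with m hm
    exact coneLe_of_monotone hK0 hKadd hdinc n m hm
  -- estimate for elements above d n
  have hest : ∀ n, ∀ c' ∈ C, coneLe K (d n) c' → ‖c' - d n‖ < 2 / (n + 1) := by
    intro n c' hc' hle
    have h1 : ‖c' - c n‖ < 1 / (n + 1) :=
      hcprop n c' hc' (coneLe_trans hKadd (hdprop n).2 hle)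
    have h2 : ‖d n - c n‖ < 1 / (n + 1) :=
      hcprop n (d n) (hdprop n).1 (hdprop n).2
    calc ‖c' - d n‖ = ‖(c' - c n) - (d n - c n)‖ := by rw [sub_sub_sub_cancel_right]
      _ ≤ ‖c' - c n‖ + ‖d n - c n‖ := norm_sub_le _ _
      _ < 1 / (n + 1) + 1 / (n + 1) := by linarith
      _ = 2 / (n + 1) := by ring
  refine ⟨s, d, fun n => (hdprop n).1, hs, ?_, ?_⟩
  · intro c' hc'
    by_cases hex : ∃ n, coneLe K c' (d n)
    · obtain ⟨n, hn⟩ := hex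
      exact coneLe_trans hKadd hn (hds n)
    · push_neg at hex
      have hge : ∀ n, coneLe K (d n) c' := by
        intro n
        rcases htot _ hc' _ (hdprop n).1 with h' | h'
        · exact absurd h' (hex n)
        · exact h'
      have : Tendsto d atTop (nhds c') := by
        rw [tendsto_iff_norm_sub_tendsto_zero]
        have hub : Tendsto (fun n : ℕ => 2 / ((n : ℝ) + 1)) atTop (nhds 0) := by
          simpa [div_eq_mul_inv] using ((tendsto_one_div_add_atTop_nhds_zero_nat :
            Tendsto (fun n : ℕ => 1 / ((n : ℝ) + 1)) atTop (nhds 0)).const_mul 2)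
        refine squeeze_zero (fun n => norm_nonneg _) (fun n => ?_) hub
        rw [norm_sub_rev]
        exact le_of_lt (hest n c' hc' (hge n))
      have : c' = s := tendsto_nhds_unique this hs
      rw [this]; exact coneLe_refl hK0 _
  · intro b' hb'
    exact coneLe_lim_left hKclosed (Eventually.of_forall fun n => hb' _ (hdprop n).1) hs

end Aux

lemma fix_of_lim {X : Type*} [NormedAddCommGroup X] [NormedSpace ℝ X] [CompleteSpace X]
    {D : Set X} (F : X → X)
    (hFdemi : ∀ (u : ℕ → X), (∀ n, u n ∈ D) → ∀ p ∈ D,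
      Tendsto u atTop (nhds p) →
      ∀ f : X →L[ℝ] ℝ, Tendsto (fun n => f (F (u n))) atTop (nhds (f (F p))))
    {u : ℕ → X} (hu : ∀ n, u n ∈ D) {p : X} (hp : p ∈ D)
    (hup : Tendsto u atTop (nhds p))
    (hFu : Tendsto (fun n => F (u n)) atTop (nhds p)) : F p = p := by
  rw [NormedSpace.eq_iff_forall_dual_eq ℝ]
  intro g
  exact tendsto_nhds_unique (hFdemi u hu p hp hup g) ((g.continuous.tendsto p).comp hFu)


/-- Theorem 4.1 (a), (a'): in a regular partially ordered Banach space, for an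
≼-increasing demi-continuous mapping `F : D → D` on a nonempty closed inductive set `D`,
with a point `x₀ ∈ D` such that `x₀ ≼ F x₀`, the fixed point set `𝔉(F)` is a nonempty
chain-complete subset of `D`, and `F` has a maximal fixed point. -/
theorem demicontinuous_fixed_points_chainComplete_of_regular
    {X : Type*} [NormedAddCommGroup X] [NormedSpace ℝ X] [CompleteSpace X]
    (K : Set X) (hKclosed : IsClosed K) (hK0 : (0 : X) ∈ K)
    (hKadd : ∀ x ∈ K, ∀ y ∈ K, x + y ∈ K)
    (hKsmul : ∀ c : ℝ, 0 ≤ c → ∀ x ∈ K, c • x ∈ K)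
    (hKpointed : ∀ x ∈ K, -x ∈ K → x = 0)
    -- regularity: every ≼-increasing ≼-upper-bounded sequence converges in norm
    (hreg : ∀ u : ℕ → X, (∀ n, coneLe K (u n) (u (n + 1))) →
      (∃ b, ∀ n, coneLe K (u n) b) → ∃ p, Filter.Tendsto u Filter.atTop (nhds p))
    -- D is a nonempty closed inductive subset of X
    (D : Set X) (hDne : D.Nonempty) (hDclosed : IsClosed D)
    (hDind : ∀ C ⊆ D, C.Nonempty → IsChain (coneLe K) C → ∃ b ∈ D, ∀ c ∈ C, coneLe K c b)
    -- F maps D into D and is ≼-increasing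
    (F : X → X) (hFmaps : ∀ x ∈ D, F x ∈ D)
    (hFinc : ∀ x ∈ D, ∀ y ∈ D, coneLe K x y → coneLe K (F x) (F y))
    -- F is demi-continuous: norm convergence is sent to weak convergence
    (hFdemi : ∀ (u : ℕ → X), (∀ n, u n ∈ D) → ∀ p ∈ D,
      Filter.Tendsto u Filter.atTop (nhds p) →
      ∀ f : X →L[ℝ] ℝ, Filter.Tendsto (fun n => f (F (u n))) Filter.atTop (nhds (f (F p))))
    -- starting point
    (x₀ : X) (hx₀ : x₀ ∈ D) (h₀ : coneLe K x₀ (F x₀)) :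
    ({x | x ∈ D ∧ F x = x}).Nonempty ∧
    (∀ C ⊆ {x | x ∈ D ∧ F x = x}, C.Nonempty → IsChain (coneLe K) C →
      (∃ b, ∀ c ∈ C, coneLe K c b) →
      ∃ s, s ∈ {x | x ∈ D ∧ F x = x} ∧ (∀ c ∈ C, coneLe K c s) ∧
        ∀ b, (∀ c ∈ C, coneLe K c b) → coneLe K s b) ∧
    (∃ m, m ∈ {x | x ∈ D ∧ F x = x} ∧
      ∀ y ∈ {x | x ∈ D ∧ F x = x}, coneLe K m y → m = y) := by
  -- Part (a): the fixed point set is nonempty, via the iterate sequence of x₀.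
  have hfix : ∃ p, p ∈ D ∧ F p = p := by
    set u : ℕ → X := fun n => F^[n] x₀ with hu
    have husucc : ∀ n, u (n + 1) = F (u n) := fun n => Function.iterate_succ_apply' F n x₀
    have huD : ∀ n, u n ∈ D := by
      intro n
      induction n with
      | zero => exact hx₀
      | succ n ih => rw [husucc]; exact hFmaps _ ih
    have huinc : ∀ n, coneLe K (u n) (u (n + 1)) := by
      intro n
      induction n with
      | zero => simpa [husucc, hu] using h₀
      | succ n ih =>
        rw [husucc (n + 1), husucc n]
        exact hFinc _ (huD n) _ (husucc n ▸ huD (n + 1)) (husucc n ▸ ih)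
    have hmono : ∀ m n, m ≤ n → coneLe K (u m) (u n) :=
      coneLe_of_monotone hK0 hKadd huinc
    have hchain : IsChain (coneLe K) (Set.range u) := by
      rintro _ ⟨m, rfl⟩ _ ⟨n, rfl⟩ -
      rcases le_total m n with h | h
      · exact Or.inl (hmono m n h)
      · exact Or.inr (hmono n m h)
    obtain ⟨b, hbD, hb⟩ := hDind (Set.range u) (Set.range_subset_iff.mpr huD)
      ⟨u 0, Set.mem_range_self 0⟩ hchain
    obtain ⟨p, hp⟩ := hreg u huinc ⟨b, fun n => hb _ (Set.mem_range_self n)⟩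
    have hpD : p ∈ D := hDclosed.mem_of_tendsto hp (Filter.Eventually.of_forall huD)
    have hFu : Filter.Tendsto (fun n => F (u n)) Filter.atTop (nhds p) :=
      (hp.comp (Filter.tendsto_add_atTop_nat 1)).congr fun n => husucc n
    exact ⟨p, hpD, fix_of_lim F hFdemi huD hpD hp hFu⟩
  obtain ⟨p, hpD, hFp⟩ := hfix
  -- Part (a'): chain-completeness of the fixed point set.
  have hcc : ∀ C ⊆ {x | x ∈ D ∧ F x = x}, C.Nonempty → IsChain (coneLe K) C →
      (∃ b, ∀ c ∈ C, coneLe K c b) →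
      ∃ s, s ∈ {x | x ∈ D ∧ F x = x} ∧ (∀ c ∈ C, coneLe K c s) ∧
        ∀ b, (∀ c ∈ C, coneLe K c b) → coneLe K s b := by
    intro C hCsub hCne hCchain hCbdd
    obtain ⟨b, hb⟩ := hCbdd
    obtain ⟨s, d, hdC, hds, hub, hlub⟩ :=
      chain_lub hKclosed hK0 hKadd hreg hCchain hCne hb
    have hdD : ∀ n, d n ∈ D := fun n => (hCsub (hdC n)).1
    have hsD : s ∈ D := hDclosed.mem_of_tendsto hds (Filter.Eventually.of_forall hdD)
    have hFd : Filter.Tendsto (fun n => F (d n)) Filter.atTop (nhds s) :=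
      hds.congr fun n => ((hCsub (hdC n)).2).symm
    exact ⟨s, ⟨hsD, fix_of_lim F hFdemi hdD hsD hds hFd⟩, hub, hlub⟩
  -- Maximal fixed point via Zorn's lemma.
  refine ⟨⟨p, hpD, hFp⟩, hcc, ?_⟩
  letI : Preorder X :=
    { le := coneLe K
      le_refl := coneLe_refl hK0
      le_trans := fun _ _ _ h1 h2 => coneLe_trans hKadd h1 h2 }
  obtain ⟨m, hm⟩ := zorn_le₀ {x | x ∈ D ∧ F x = x} (by
    intro C hCsub hCchain
    rcases C.eq_empty_or_nonempty with rfl | hCne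
    · exact ⟨p, ⟨hpD, hFp⟩, by simp⟩
    · obtain ⟨b, hbD, hb⟩ := hDind C (fun x hx => (hCsub hx).1) hCne hCchain
      obtain ⟨s, hs, hub, -⟩ := hcc C hCsub hCne hCchain ⟨b, hb⟩
      exact ⟨s, hs, hub⟩)
  refine ⟨m, hm.1, fun y hy hmy => ?_⟩
  have hym : coneLe K y m := hm.2 hy hmy
  have : y - m = 0 := hKpointed _ hmy (by simpa [neg_sub, coneLe] using hym)
  have := sub_eq_zero.mp this
  exact this.symm
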